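/- The generalized Fourier metric d̃_2(μ,ν) := d_2(μ̄_0, ν̄_0) + |m⃗_μ - m⃗_ν| + |M_μ - M_ν| is a metric on the set of positive Radon measures on ℝ^d with finite second moment and positive total mass; in particular, d̃_2(μ,ν) = 0 implies μ = ν. -/

import Mathlib

open MeasureTheory

noncomputable section

/-- The Fourier transform of a measure on a real inner product space. -/
def fourierT {F : Type*} [NormedAddCommGroup F] [InnerProductSpace ℝ F] [MeasurableSpace F]
    (μ : Measure F) (ξ : F) : ℂ :=
  ∫ x, Complex.exp (-Complex.I * ((inner ℝ x ξ : ℝ) : ℂ)) ∂μ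

/-- The Fourier metric `d₂(μ,ν) = sup_{ξ ≠ 0} |μ̂(ξ) - ν̂(ξ)| / |ξ|²`. -/
def fourierDist2 {F : Type*} [NormedAddCommGroup F] [InnerProductSpace ℝ F] [MeasurableSpace F]
    (μ ν : Measure F) : ℝ :=
  ⨆ ξ : {ξ : F // ξ ≠ 0}, ‖fourierT μ ξ - fourierT ν ξ‖ / ‖(ξ : F)‖ ^ 2

/-- The barycenter `m⃗_μ = (1/M_μ) ∫ x dμ(x)`. -/
def bary {F : Type*} [NormedAddCommGroup F] [NormedSpace ℝ F] [MeasurableSpace F]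
    (μ : Measure F) : F :=
  ((μ Set.univ).toReal)⁻¹ • ∫ x, x ∂μ

/-- The centered normalization `μ̄₀ = (1/M_μ) T_{m⃗_μ} μ`. -/
def centerNorm {F : Type*} [NormedAddCommGroup F] [NormedSpace ℝ F] [MeasurableSpace F]
    (μ : Measure F) : Measure F :=
  (μ Set.univ)⁻¹ • μ.map (fun x => x - bary μ)

/-- The generalized Fourier metric
`d̃₂(μ,ν) = d₂(μ̄₀, ν̄₀) + |m⃗_μ - m⃗_ν| + |M_μ - M_ν|`. -/
def fourierDistTilde2 {F : Type*} [NormedAddCommGroup F] [InnerProductSpace ℝ F]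
    [MeasurableSpace F] (μ ν : Measure F) : ℝ :=
  fourierDist2 (centerNorm μ) (centerNorm ν) + ‖bary μ - bary ν‖
    + |(μ Set.univ).toReal - (ν Set.univ).toReal|

open MeasureTheory Metric Set Function Filter FourierTransform Real
open scoped Topology RealInnerProductSpace ENNReal
set_option linter.unusedSectionVars false
set_option maxHeartbeats 1000000

variable {E : Type*} [NormedAddCommGroup E] [NormedSpace ℝ E] [FiniteDimensional ℝ E]

private lemma contDiff_finset_prod'' {ι : Type*} (t : Finset ι) (g : ι → E → ℝ)
    (h : ∀ i ∈ t, ContDiff ℝ (⊤ : ℕ∞) (g i)) :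
    ContDiff ℝ (⊤ : ℕ∞) (fun y => ∏ i ∈ t, g i y) := by
  classical
  induction t using Finset.induction_on with
  | empty => simpa using contDiff_const
  | insert a s hn ih =>
    simp only [Finset.prod_insert hn]
    exact (h a (Finset.mem_insert_self a s)).mul
      (ih (fun i hi => h i (Finset.mem_insert_of_mem hi)))

/-- Smooth Urysohn: compactly supported smooth bump that is 1 on a compact set `K`
and supported inside an open set `U ⊇ K`. -/
lemma exists_smooth_bump {K U : Set E} (hK : IsCompact K) (hU : IsOpen U) (hKU : K ⊆ U) :
    ∃ f : E → ℝ, ContDiff ℝ (⊤ : ℕ∞) f ∧ HasCompactSupport f ∧ Set.EqOn f 1 K ∧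
      (∀ x, f x ∈ Set.Icc (0:ℝ) 1) ∧ tsupport f ⊆ U := by
  classical
  have hr : ∀ x ∈ K, ∃ r : ℝ, 0 < r ∧ closedBall x r ⊆ U := by
    intro x hx
    rcases Metric.nhds_basis_closedBall.mem_iff.1 (hU.mem_nhds (hKU hx)) with ⟨r, hr, hrU⟩
    exact ⟨r, hr, hrU⟩
  choose! r hr0 hrU using hr
  have hb : ∀ x ∈ K, ∃ g : E → ℝ, ContDiff ℝ (⊤ : ℕ∞) g ∧
      (∀ y ∈ ball x (r x / 2), g y = 1) ∧ support g ⊆ ball x (r x) ∧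
      ∀ y, g y ∈ Set.Icc (0:ℝ) 1 := by
    intro x hx
    have hrx := hr0 x hx
    let c : ContDiffBump x := ⟨r x / 2, r x, half_pos hrx, half_lt_self hrx⟩
    refine ⟨c, c.contDiff, fun y hy => c.one_of_mem_closedBall (ball_subset_closedBall hy),
      ?_, fun y => ⟨c.nonneg, c.le_one⟩⟩
    rw [c.support_eq]
  choose! g hg1 hg2 hg3 hg4 using hb
  obtain ⟨t, htK, hcov⟩ := hK.elim_nhds_subcover (fun x => ball x (r x / 2))
    (fun x hx => ball_mem_nhds _ (half_pos (hr0 x hx)))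
  refine ⟨fun y => 1 - ∏ x ∈ t, (1 - g x y), ?_, ?_, ?_, ?_, ?_⟩
  · exact contDiff_const.sub
      (contDiff_finset_prod'' t _ (fun i hi => contDiff_const.sub (hg1 i (htK i hi))))
  · apply HasCompactSupport.intro (K := ⋃ x ∈ t, closedBall x (r x))
      (t.finite_toSet.isCompact_biUnion (fun x _ => isCompact_closedBall x (r x)))
    intro y hy
    have : ∀ x ∈ t, g x y = 0 := by
      intro x hx
      by_contra h
      exact hy (Set.mem_biUnion hx (ball_subset_closedBall (hg3 x (htK x hx) h)))
    have h1 : ∏ x ∈ t, (1 - g x y) = 1 :=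
      Finset.prod_eq_one (fun x hx => by rw [this x hx]; ring)
    simp [h1]
  · intro y hy
    obtain ⟨x, hxt, hxy⟩ : ∃ x ∈ t, y ∈ ball x (r x / 2) := by
      simpa using hcov hy
    have : (1 - g x y) = 0 := by rw [hg2 x (htK x hxt) y hxy]; ring
    simp [Finset.prod_eq_zero (f := fun x => 1 - g x y) hxt this]
  · intro y
    have h0 : 0 ≤ ∏ x ∈ t, (1 - g x y) :=
      Finset.prod_nonneg fun x hx => by
        have := (hg4 x (htK x hx) y).2; linarith
    have h1 : ∏ x ∈ t, (1 - g x y) ≤ 1 :=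
      Finset.prod_le_one (fun x hx => by have := (hg4 x (htK x hx) y).2; linarith)
        (fun x hx => by have := (hg4 x (htK x hx) y).1; linarith)
    constructor <;> simp <;> linarith
  · have hsub : support (fun y => 1 - ∏ x ∈ t, (1 - g x y)) ⊆ ⋃ x ∈ t, closedBall x (r x) := by
      intro y hy
      by_contra h
      have : ∀ x ∈ t, g x y = 0 := by
        intro x hx
        by_contra hgx
        exact h (Set.mem_biUnion hx (ball_subset_closedBall (hg3 x (htK x hx) hgx)))
      apply hy
      have h1 : ∏ x ∈ t, (1 - g x y) = 1 :=
        Finset.prod_eq_one (fun x hx => by rw [this x hx]; ring)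
      simp [h1]
    have hclosed : IsClosed (⋃ x ∈ t, closedBall x (r x)) :=
      t.finite_toSet.isClosed_biUnion (fun x _ => isClosed_closedBall)
    refine (closure_minimal hsub hclosed).trans ?_
    exact Set.iUnion₂_subset fun x hx => hrU x (htK x hx)

/-- A smooth compactly supported function is a Schwartz function. -/
lemma exists_schwartz_of_compactSupport {F : Type*} [NormedAddCommGroup F] [NormedSpace ℝ F]
    {f : E → F} (h1 : ContDiff ℝ (⊤ : ℕ∞) f) (h2 : HasCompactSupport f) :
    ∃ h : SchwartzMap E F, ⇑h = f := by
  refine ⟨⟨f, h1, ?_⟩, rfl⟩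
  intro k n
  have hcont : Continuous (fun x => ‖x‖ ^ k * ‖iteratedFDeriv ℝ n f x‖) :=
    ((continuous_norm.pow k).mul
      ((h1.continuous_iteratedFDeriv (by exact_mod_cast le_top)).norm))
  have hcs : HasCompactSupport (fun x => ‖x‖ ^ k * ‖iteratedFDeriv ℝ n f x‖) :=
    ((h2.iteratedFDeriv n).norm).mul_left
  obtain ⟨C, hC⟩ := hcont.bounded_above_of_compact_support hcs
  exact ⟨C, fun x => (le_abs_self _).trans ((Real.norm_eq_abs _).symm ▸ hC x)⟩




variable {E : Type*} [NormedAddCommGroup E] [InnerProductSpace ℝ E] [FiniteDimensional ℝ E]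
  [MeasurableSpace E] [BorelSpace E]

lemma char_eq_fourierT (μ : Measure E) (ξ : E) :
    VectorFourier.fourierIntegral Real.fourierChar μ (innerₗ E) (fun _ => (1:ℂ)) ξ
      = fourierT μ ((2 * Real.pi) • ξ) := by
  unfold VectorFourier.fourierIntegral fourierT
  congr 1
  ext x
  rw [Circle.smul_def, Real.fourierChar_apply]
  have : (inner ℝ x ((2 * Real.pi) • ξ) : ℝ) = 2 * Real.pi * (inner ℝ x ξ : ℝ) :=
    real_inner_smul_right x ξ _
  rw [this]
  simp only [smul_eq_mul, mul_one]
  rw [show (((innerₗ E) x) ξ : ℝ) = (inner ℝ x ξ : ℝ) from rfl]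
  congr 1
  push_cast
  ring

lemma integral_schwartz_eq (μ ν : Measure E) [IsFiniteMeasure μ] [IsFiniteMeasure ν]
    (h : ∀ ξ, fourierT μ ξ = fourierT ν ξ) (f : SchwartzMap E ℂ) :
    ∫ x, f x ∂μ = ∫ x, f x ∂ν := by
  set g := (SchwartzMap.fourierTransformCLE ℝ (SchwartzMap E ℂ)).symm f with hgdef
  have hg : 𝓕 ⇑g = ⇑f := by
    have h1 : ⇑((SchwartzMap.fourierTransformCLE ℝ (SchwartzMap E ℂ)) g) = 𝓕 ⇑g :=
      rfl
    rw [← h1, hgdef, (SchwartzMap.fourierTransformCLE ℝ (SchwartzMap E ℂ)).apply_symm_apply]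
  have flip_eq : (innerₗ E).flip = innerₗ E := by
    apply LinearMap.ext; intro x; apply LinearMap.ext; intro y
    simp only [LinearMap.flip_apply]
    first
    | exact real_inner_comm x y
    | exact real_inner_comm y x
  have key : ∀ (ρ : Measure E), IsFiniteMeasure ρ →
      ∫ ξ, (VectorFourier.fourierIntegral Real.fourierChar ρ (innerₗ E)
        (fun _ => (1:ℂ)) ξ) • g ξ ∂(volume) = ∫ x, f x ∂ρ := by
    intro ρ hρ
    rw [VectorFourier.integral_fourierIntegral_smul_eq_flip Real.continuous_fourierChar
      (by exact continuous_inner) (integrable_const 1) g.integrable]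
    simp only [one_smul, flip_eq]
    calc ∫ x, VectorFourier.fourierIntegral 𝐞 volume (innerₗ E) (⇑g) x ∂ρ
        = ∫ x, 𝓕 (⇑g) x ∂ρ := rfl
      _ = ∫ x, f x ∂ρ := by rw [hg]
  rw [← key μ inferInstance, ← key ν inferInstance]
  congr 1
  ext ξ
  rw [char_eq_fourierT, char_eq_fourierT, h]

lemma integral_smooth_eq (μ ν : Measure E) [IsFiniteMeasure μ] [IsFiniteMeasure ν]
    (h : ∀ ξ, fourierT μ ξ = fourierT ν ξ) (f : E → ℝ) (h1 : ContDiff ℝ (⊤ : ℕ∞) f)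
    (h2 : HasCompactSupport f) : ∫ x, f x ∂μ = ∫ x, f x ∂ν := by
  have hc1 : ContDiff ℝ (⊤ : ℕ∞) (fun x => (f x : ℂ)) :=
    Complex.ofRealCLM.contDiff.comp h1
  have hc2 : HasCompactSupport (fun x => (f x : ℂ)) :=
    h2.comp_left (g := Complex.ofReal) Complex.ofReal_zero
  obtain ⟨g, hgco⟩ := exists_schwartz_of_compactSupport hc1 hc2
  have := integral_schwartz_eq μ ν h g
  rw [hgco] at this
  simp only at this
  have e1 : ∫ x, ((f x : ℝ) : ℂ) ∂μ = ((∫ x, f x ∂μ : ℝ) : ℂ) :=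
    Complex.ofRealLI.integral_comp_comm f
  have e2 : ∫ x, ((f x : ℝ) : ℂ) ∂ν = ((∫ x, f x ∂ν : ℝ) : ℂ) :=
    Complex.ofRealLI.integral_comp_comm f
  rw [e1, e2] at this
  exact_mod_cast this

lemma meas_compact_eq (μ ν : Measure E) [IsFiniteMeasure μ] [IsFiniteMeasure ν]
    (h : ∀ ξ, fourierT μ ξ = fourierT ν ξ) {K : Set E} (hK : IsCompact K) : μ K = ν K := by
  rcases K.eq_empty_or_nonempty with rfl | hKne
  · simp
  have hbump : ∀ n : ℕ, ∃ f : E → ℝ, ContDiff ℝ (⊤ : ℕ∞) f ∧ HasCompactSupport f ∧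
      Set.EqOn f 1 K ∧ (∀ x, f x ∈ Set.Icc (0:ℝ) 1) ∧
      tsupport f ⊆ thickening (1 / (n + 1 : ℝ)) K := by
    intro n
    exact exists_smooth_bump hK isOpen_thickening
      (self_subset_thickening (by positivity) K)
  choose f hf1 hf2 hf3 hf4 hf5 using hbump
  have hlim : ∀ (ρ : Measure E), IsFiniteMeasure ρ →
      Tendsto (fun n => ∫ x, f n x ∂ρ) atTop (𝓝 ((ρ K).toReal)) := by
    intro ρ hρ
    have : (ρ K).toReal = ∫ x, Set.indicator K (1 : E → ℝ) x ∂ρ := by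
      rw [integral_indicator_one hK.isClosed.measurableSet]
      rfl
    rw [this]
    apply tendsto_integral_of_dominated_convergence (fun _ => (1:ℝ))
    · exact fun n => ((hf1 n).continuous).aestronglyMeasurable
    · exact integrable_const 1
    · intro n
      filter_upwards with x
      rw [Real.norm_eq_abs, abs_le]
      exact ⟨by linarith [(hf4 n x).1], (hf4 n x).2⟩
    · filter_upwards with x
      by_cases hx : x ∈ K
      · simp only [Set.indicator_of_mem hx (1 : E → ℝ)]
        have : ∀ n, f n x = 1 := fun n => hf3 n hx
        simp only [this]
        exact tendsto_const_nhds
      · simp only [Set.indicator_of_notMem hx (1 : E → ℝ)]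
        have hd : 0 < infDist x K := by
          rw [← hK.isClosed.notMem_iff_infDist_pos hKne]
          exact hx
        obtain ⟨N, hN⟩ := exists_nat_gt (1 / infDist x K)
        apply Tendsto.congr' (f₁ := fun _ => (0:ℝ)) _ tendsto_const_nhds
        filter_upwards [eventually_ge_atTop N] with n hn
        by_contra hfx
        have hmem : x ∈ thickening (1 / (n + 1 : ℝ)) K :=
          hf5 n (subset_tsupport _ (Ne.symm hfx))
        rw [mem_thickening_iff_infDist_lt hKne] at hmem
        have h1 : 1 / (n + 1 : ℝ) ≤ 1 / (N + 1 : ℝ) := by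
          apply one_div_le_one_div_of_le (by positivity)
          exact_mod_cast by omega
        have h2 : 1 / infDist x K < N + 1 := by
          calc (1 : ℝ) / infDist x K < N := hN
            _ < N + 1 := by linarith
        have h3 : 1 / (N + 1 : ℝ) < infDist x K := by
          rw [div_lt_iff₀ (by positivity)]
          rw [div_lt_iff₀ hd] at h2
          linarith [mul_comm (infDist x K) ((N : ℝ) + 1)]
        linarith
  have heq : ∀ n, ∫ x, f n x ∂μ = ∫ x, f n x ∂ν :=
    fun n => integral_smooth_eq μ ν h (f n) (hf1 n) (hf2 n)
  have := tendsto_nhds_unique ((hlim μ inferInstance).congr heq) (hlim ν inferInstance)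
  exact (ENNReal.toReal_eq_toReal_iff' (measure_ne_top μ K) (measure_ne_top ν K)).1 this

lemma ext_of_fourierT (μ ν : Measure E) [IsFiniteMeasure μ] [IsFiniteMeasure ν]
    (h : ∀ ξ, fourierT μ ξ = fourierT ν ξ) : μ = ν := by
  have hclosed : ∀ F : Set E, IsClosed F → μ F = ν F := by
    intro F hF
    have hUnion : (⋃ n : ℕ, F ∩ closedBall 0 n) = F := by
      ext x
      simp only [Set.mem_iUnion, Set.mem_inter_iff, mem_closedBall, dist_zero_right]
      constructor
      · rintro ⟨n, hx, _⟩; exact hx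
      · intro hx
        exact ⟨⌈‖x‖⌉₊, hx, Nat.le_ceil _⟩
    have hmono : Monotone (fun n : ℕ => F ∩ closedBall (0:E) n) := by
      intro a b hab
      exact Set.inter_subset_inter_right _ (closedBall_subset_closedBall (by exact_mod_cast hab))
    have h1 : Tendsto (fun n : ℕ => μ (F ∩ closedBall 0 n)) atTop (𝓝 (μ F)) := by
      have := tendsto_measure_iUnion_atTop (μ := μ) hmono
      rwa [hUnion] at this
    have h2 : Tendsto (fun n : ℕ => ν (F ∩ closedBall 0 n)) atTop (𝓝 (ν F)) := by
      have := tendsto_measure_iUnion_atTop (μ := ν) hmono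
      rwa [hUnion] at this
    refine tendsto_nhds_unique (h1.congr fun n => ?_) h2
    exact meas_compact_eq μ ν h ((isCompact_closedBall _ _).inter_left hF)
  refine ext_of_generate_finite {s | IsClosed s} ?_ isPiSystem_isClosed
    (fun s hs => hclosed s hs) (hclosed univ isClosed_univ)
  borelize E
  exact borel_eq_generateFrom_isClosed

lemma cexp_taylor_bound (t : ℝ) :
    ‖Complex.exp (-Complex.I * t) - 1 + Complex.I * t‖ ≤ 3 * t ^ 2 := by
  have hkey : Complex.exp (-Complex.I * t) - 1 + Complex.I * t
      = Complex.exp (-Complex.I * t) - 1 - (-Complex.I * t) := by ring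
  rcases le_or_gt |t| 1 with h | h
  · have habs : ‖-Complex.I * ↑t‖ = |t| := by
      simp
    have hz : ‖-Complex.I * ↑t‖ ≤ 1 := by rw [habs]; exact h
    have := Complex.norm_exp_sub_one_sub_id_le hz
    rw [habs] at this
    rw [hkey]
    calc ‖Complex.exp (-Complex.I * ↑t) - 1 - (-Complex.I * ↑t)‖ ≤ |t| ^ 2 := this
      _ = t ^ 2 := sq_abs t
      _ ≤ 3 * t ^ 2 := by nlinarith [sq_nonneg t]
  · have h1 : ‖Complex.exp (-Complex.I * ↑t)‖ = 1 := by
      rw [Complex.norm_exp]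
      have : (-Complex.I * ↑t).re = 0 := by simp
      rw [this, Real.exp_zero]
    have h2 : ‖Complex.I * (t:ℂ)‖ = |t| := by
      simp
    calc ‖Complex.exp (-Complex.I * ↑t) - 1 + Complex.I * ↑t‖
        ≤ ‖Complex.exp (-Complex.I * ↑t) - 1‖ + ‖Complex.I * (t:ℂ)‖ := norm_add_le _ _
      _ ≤ ‖Complex.exp (-Complex.I * ↑t)‖ + ‖(1:ℂ)‖ + ‖Complex.I * (t:ℂ)‖ := by
          linarith [norm_sub_le (Complex.exp (-Complex.I * ↑t)) (1:ℂ)]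
      _ = 1 + 1 + |t| := by rw [h1, h2, norm_one]
      _ ≤ 3 * t ^ 2 := by nlinarith [sq_abs t, abs_nonneg t]

variable {E : Type*} [NormedAddCommGroup E] [InnerProductSpace ℝ E]
  [MeasurableSpace E] [BorelSpace E] [SecondCountableTopology E] [CompleteSpace E]

lemma integrable_id_of_sq (μ : Measure E) [IsFiniteMeasure μ]
    (h2 : Integrable (fun x => ‖x‖ ^ 2) μ) : Integrable (fun x : E => x) μ := by
  refine Integrable.mono' ((integrable_const (1:ℝ)).add h2) aestronglyMeasurable_id ?_
  filter_upwards with x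
  simp only [Pi.add_apply]
  nlinarith [sq_nonneg (‖x‖ - 1), norm_nonneg x]

lemma norm_fourierT_sub_one (ρ : Measure E) [IsProbabilityMeasure ρ]
    (h2 : Integrable (fun x => ‖x‖ ^ 2) ρ) (h0 : ∫ x, x ∂ρ = 0) (ξ : E) :
    ‖fourierT ρ ξ - 1‖ ≤ 3 * (∫ x, ‖x‖ ^ 2 ∂ρ) * ‖ξ‖ ^ 2 := by
  have hid : Integrable (fun x : E => x) ρ := integrable_id_of_sq ρ h2
  have hcont : Continuous fun x : E => Complex.exp (-Complex.I * ((inner ℝ x ξ : ℝ) : ℂ)) := by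
    apply Complex.continuous_exp.comp
    exact continuous_const.mul (Complex.continuous_ofReal.comp
      (continuous_id.inner continuous_const))
  have hexp : Integrable (fun x => Complex.exp (-Complex.I * ((inner ℝ x ξ : ℝ) : ℂ))) ρ := by
    refine Integrable.mono' (integrable_const (1:ℝ)) hcont.aestronglyMeasurable ?_
    filter_upwards with x
    rw [Complex.norm_exp]
    simp
  have hsymm : (fun x : E => (inner ℝ x ξ : ℝ)) = fun x => (inner ℝ ξ x : ℝ) :=
    funext fun x => (real_inner_comm x ξ).symm
  have hinner : Integrable (fun x => (inner ℝ x ξ : ℝ)) ρ := by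
    rw [hsymm]
    exact ContinuousLinearMap.integrable_comp (innerSL ℝ ξ) hid
  have hinnerC : Integrable (fun x => ((inner ℝ x ξ : ℝ) : ℂ)) ρ := hinner.ofReal
  have hmean : ∫ x, (inner ℝ x ξ : ℝ) ∂ρ = 0 := by
    rw [hsymm]
    have := ContinuousLinearMap.integral_comp_comm (innerSL ℝ ξ) hid
    rw [h0] at this
    simpa using this
  have hmeanC : ∫ x, ((inner ℝ x ξ : ℝ) : ℂ) ∂ρ = 0 := by
    have h' : ∫ x, ((inner ℝ x ξ : ℝ) : ℂ) ∂ρ = ((∫ x, (inner ℝ x ξ : ℝ) ∂ρ : ℝ) : ℂ) :=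
      Complex.ofRealLI.integral_comp_comm _
    rw [h', hmean]
    simp
  have hsplit : fourierT ρ ξ - 1 =
      ∫ x, (Complex.exp (-Complex.I * ((inner ℝ x ξ : ℝ) : ℂ)) - 1
        + Complex.I * ((inner ℝ x ξ : ℝ) : ℂ)) ∂ρ := by
    have hsub : Integrable (fun x => Complex.exp (-Complex.I * ((inner ℝ x ξ : ℝ) : ℂ)) - 1) ρ := by
      exact hexp.sub (integrable_const 1)
    rw [integral_add hsub (hinnerC.const_mul Complex.I),
      integral_sub hexp (integrable_const 1), integral_const, integral_const_mul, hmeanC]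
    simp [fourierT, measure_univ]
  rw [hsplit]
  calc ‖∫ x, (Complex.exp (-Complex.I * ((inner ℝ x ξ : ℝ) : ℂ)) - 1
        + Complex.I * ((inner ℝ x ξ : ℝ) : ℂ)) ∂ρ‖
      ≤ ∫ x, ‖Complex.exp (-Complex.I * ((inner ℝ x ξ : ℝ) : ℂ)) - 1
        + Complex.I * ((inner ℝ x ξ : ℝ) : ℂ)‖ ∂ρ := norm_integral_le_integral_norm _
    _ ≤ ∫ x, 3 * ‖ξ‖ ^ 2 * ‖x‖ ^ 2 ∂ρ := by
        have hsub : Integrable (fun x => Complex.exp (-Complex.I * ((inner ℝ x ξ : ℝ) : ℂ)) - 1) ρ := by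
          exact hexp.sub (integrable_const 1)
        apply integral_mono (hsub.add (hinnerC.const_mul Complex.I)).norm (h2.const_mul _)
        intro x
        calc ‖Complex.exp (-Complex.I * ((inner ℝ x ξ : ℝ) : ℂ)) - 1
            + Complex.I * ((inner ℝ x ξ : ℝ) : ℂ)‖ ≤ 3 * (inner ℝ x ξ : ℝ) ^ 2 :=
              cexp_taylor_bound (inner ℝ x ξ : ℝ)
          _ ≤ 3 * ‖ξ‖ ^ 2 * ‖x‖ ^ 2 := by
              nlinarith [abs_real_inner_le_norm x ξ, sq_abs (inner ℝ x ξ : ℝ),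
                abs_nonneg (inner ℝ x ξ : ℝ), norm_nonneg x, norm_nonneg ξ,
                mul_nonneg (norm_nonneg x) (norm_nonneg ξ)]
    _ = 3 * (∫ x, ‖x‖ ^ 2 ∂ρ) * ‖ξ‖ ^ 2 := by
        rw [integral_const_mul]; ring
  
lemma fourierT_zero (ρ : Measure E) [IsProbabilityMeasure ρ] : fourierT ρ 0 = 1 := by
  simp [fourierT, inner_zero_right, measure_univ]

lemma fourierT_dist_term_bound (ρ τ : Measure E) [IsProbabilityMeasure ρ] [IsProbabilityMeasure τ]
    (h2ρ : Integrable (fun x => ‖x‖ ^ 2) ρ) (h2τ : Integrable (fun x => ‖x‖ ^ 2) τ)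
    (h0ρ : ∫ x, x ∂ρ = 0) (h0τ : ∫ x, x ∂τ = 0) (ξ : E) (hξ : ξ ≠ 0) :
    ‖fourierT ρ ξ - fourierT τ ξ‖ / ‖ξ‖ ^ 2
      ≤ 3 * ((∫ x, ‖x‖ ^ 2 ∂ρ) + (∫ x, ‖x‖ ^ 2 ∂τ)) := by
  have hξ2 : (0:ℝ) < ‖ξ‖ ^ 2 := pow_pos (norm_pos_iff.mpr hξ) 2
  rw [div_le_iff₀ hξ2]
  calc ‖fourierT ρ ξ - fourierT τ ξ‖
      = ‖(fourierT ρ ξ - 1) - (fourierT τ ξ - 1)‖ := by ring_nf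
    _ ≤ ‖fourierT ρ ξ - 1‖ + ‖fourierT τ ξ - 1‖ := norm_sub_le _ _
    _ ≤ 3 * (∫ x, ‖x‖ ^ 2 ∂ρ) * ‖ξ‖ ^ 2 + 3 * (∫ x, ‖x‖ ^ 2 ∂τ) * ‖ξ‖ ^ 2 :=
        add_le_add (norm_fourierT_sub_one ρ h2ρ h0ρ ξ) (norm_fourierT_sub_one τ h2τ h0τ ξ)
    _ = 3 * ((∫ x, ‖x‖ ^ 2 ∂ρ) + (∫ x, ‖x‖ ^ 2 ∂τ)) * ‖ξ‖ ^ 2 := by ring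

section CenterNorm

variable (μ : Measure E) [IsFiniteMeasure μ]

lemma centerNorm_measurable_shift (m : E) : Measurable (fun x : E => x - m) :=
  measurable_id.sub_const m

lemma centerNorm_isProbability (h0 : μ Set.univ ≠ 0) :
    IsProbabilityMeasure (centerNorm μ) := by
  constructor
  rw [centerNorm, Measure.smul_apply,
    Measure.map_apply (centerNorm_measurable_shift (bary μ)) MeasurableSet.univ]
  simp only [Set.preimage_univ, smul_eq_mul]
  exact ENNReal.inv_mul_cancel h0 (measure_ne_top μ _)

lemma centerNorm_integrable_sq (h0 : μ Set.univ ≠ 0)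
    (h2 : Integrable (fun x => ‖x‖ ^ 2) μ) :
    Integrable (fun x => ‖x‖ ^ 2) (centerNorm μ) := by
  rw [centerNorm, integrable_smul_measure (ENNReal.inv_ne_zero.2 (measure_ne_top μ _))
    (ENNReal.inv_ne_top.2 h0),
    integrable_map_measure (g := fun x : E => ‖x‖ ^ 2) (continuous_norm.pow 2).aestronglyMeasurable
    (centerNorm_measurable_shift (bary μ)).aemeasurable]
  refine Integrable.mono' ((h2.const_mul 2).add (integrable_const (2 * ‖bary μ‖ ^ 2)))
    ((continuous_norm.pow 2).comp (continuous_id.sub continuous_const)).aestronglyMeasurable ?_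
  filter_upwards with x
  simp only [Function.comp_apply, Pi.add_apply]
  rw [Real.norm_eq_abs, abs_of_nonneg (by positivity)]
  have h1 : ‖x - bary μ‖ ^ 2 ≤ (‖x‖ + ‖bary μ‖) ^ 2 :=
    pow_le_pow_left₀ (norm_nonneg _) (norm_sub_le x (bary μ)) 2
  nlinarith [sq_nonneg (‖x‖ - ‖bary μ‖)]

lemma centerNorm_mean_zero (h0 : μ Set.univ ≠ 0)
    (h2 : Integrable (fun x => ‖x‖ ^ 2) μ) : ∫ x, x ∂(centerNorm μ) = 0 := by
  have hid : Integrable (fun x : E => x) μ := integrable_id_of_sq μ h2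
  have htR : ((μ Set.univ).toReal) ≠ 0 :=
    (ENNReal.toReal_pos h0 (measure_ne_top μ _)).ne'
  have hasm : AEStronglyMeasurable (fun y : E => y) (μ.map (fun x => x - bary μ)) :=
    aestronglyMeasurable_id
  rw [centerNorm, integral_smul_measure,
    integral_map (centerNorm_measurable_shift (bary μ)).aemeasurable hasm]
  rw [integral_sub hid (integrable_const (bary μ)), integral_const]
  rw [bary, measureReal_def, smul_inv_smul₀ htR]
  simp

lemma centerNorm_reconstruct (h0 : μ Set.univ ≠ 0) :
    (μ Set.univ) • ((centerNorm μ).map (fun x => x + bary μ)) = μ := by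
  have hadd : Measurable (fun x : E => x + bary μ) := measurable_id.add_const _
  rw [centerNorm, Measure.map_smul,
    Measure.map_map hadd (centerNorm_measurable_shift (bary μ))]
  have hcomp : ((fun x : E => x + bary μ) ∘ (fun x => x - bary μ)) = id :=
    funext fun x => by simp
  rw [hcomp, Measure.map_id, smul_smul, ENNReal.mul_inv_cancel h0 (measure_ne_top μ _), one_smul]

end CenterNorm

section Main

lemma fourierDist2_nonneg {F : Type*} [NormedAddCommGroup F] [InnerProductSpace ℝ F]
    [MeasurableSpace F] (ρ τ : Measure F) : 0 ≤ fourierDist2 ρ τ :=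
  Real.iSup_nonneg fun ξ => div_nonneg (norm_nonneg _) (by positivity)

lemma fourierDist2_symm {F : Type*} [NormedAddCommGroup F] [InnerProductSpace ℝ F]
    [MeasurableSpace F] (ρ τ : Measure F) : fourierDist2 ρ τ = fourierDist2 τ ρ := by
  unfold fourierDist2
  congr 1
  funext ξ
  rw [norm_sub_rev]


/-- The generalized Fourier metric `d̃₂` is a metric on positive Radon measures on
`ℝ^d` with finite second moment and positive total mass: it is nonnegative,
symmetric, satisfies the triangle inequality, and `d̃₂(μ,ν) = 0` implies `μ = ν`. -/
theorem fourierDistTilde2_is_metric (d : ℕ)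
    (μ ν σ : Measure (EuclideanSpace ℝ (Fin d)))
    [IsFiniteMeasure μ] [IsFiniteMeasure ν] [IsFiniteMeasure σ]
    (hMμ : 0 < μ Set.univ) (hMν : 0 < ν Set.univ) (hMσ : 0 < σ Set.univ)
    (h2μ : Integrable (fun x => ‖x‖ ^ 2) μ) (h2ν : Integrable (fun x => ‖x‖ ^ 2) ν)
    (h2σ : Integrable (fun x => ‖x‖ ^ 2) σ) :
    0 ≤ fourierDistTilde2 μ ν
    ∧ fourierDistTilde2 μ ν = fourierDistTilde2 ν μ
    ∧ fourierDistTilde2 μ σ ≤ fourierDistTilde2 μ ν + fourierDistTilde2 ν σ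
    ∧ (fourierDistTilde2 μ ν = 0 → μ = ν) := by
  have hμ0 : μ Set.univ ≠ 0 := hMμ.ne'
  have hν0 : ν Set.univ ≠ 0 := hMν.ne'
  have hσ0 : σ Set.univ ≠ 0 := hMσ.ne'
  haveI hPμ : IsProbabilityMeasure (centerNorm μ) := centerNorm_isProbability μ hμ0
  haveI hPν : IsProbabilityMeasure (centerNorm ν) := centerNorm_isProbability ν hν0
  haveI hPσ : IsProbabilityMeasure (centerNorm σ) := centerNorm_isProbability σ hσ0
  have h2cμ := centerNorm_integrable_sq μ hμ0 h2μ
  have h2cν := centerNorm_integrable_sq ν hν0 h2ν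
  have h2cσ := centerNorm_integrable_sq σ hσ0 h2σ
  have h0cμ := centerNorm_mean_zero μ hμ0 h2μ
  have h0cν := centerNorm_mean_zero ν hν0 h2ν
  have h0cσ := centerNorm_mean_zero σ hσ0 h2σ
  -- boundedness of the sup families
  have hbdd : ∀ (ρ τ : Measure (EuclideanSpace ℝ (Fin d))) (_ : IsProbabilityMeasure ρ) (_ : IsProbabilityMeasure τ)
      (_ : Integrable (fun x => ‖x‖ ^ 2) ρ) (_ : Integrable (fun x => ‖x‖ ^ 2) τ)
      (_ : ∫ x, x ∂ρ = 0) (_ : ∫ x, x ∂τ = 0),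
      BddAbove (Set.range fun ξ : {ξ : EuclideanSpace ℝ (Fin d) // ξ ≠ 0} =>
        ‖fourierT ρ ξ - fourierT τ ξ‖ / ‖(ξ : EuclideanSpace ℝ (Fin d))‖ ^ 2) := by
    intro ρ τ hρ hτ h2ρ h2τ h0ρ h0τ
    refine ⟨3 * ((∫ x, ‖x‖ ^ 2 ∂ρ) + (∫ x, ‖x‖ ^ 2 ∂τ)), ?_⟩
    rintro r ⟨ξ, rfl⟩
    exact fourierT_dist_term_bound ρ τ h2ρ h2τ h0ρ h0τ ξ.1 ξ.2
  have hbddμν := hbdd _ _ hPμ hPν h2cμ h2cν h0cμ h0cν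
  have hbddνσ := hbdd _ _ hPν hPσ h2cν h2cσ h0cν h0cσ
  refine ⟨?_, ?_, ?_, ?_⟩
  · -- nonnegativity
    have h1 := fourierDist2_nonneg (centerNorm μ) (centerNorm ν)
    have h2 : (0:ℝ) ≤ ‖bary μ - bary ν‖ := norm_nonneg _
    have h3 : (0:ℝ) ≤ |(μ Set.univ).toReal - (ν Set.univ).toReal| := abs_nonneg _
    unfold fourierDistTilde2
    linarith
  · -- symmetry
    unfold fourierDistTilde2
    rw [fourierDist2_symm, norm_sub_rev, abs_sub_comm]
  · -- triangle inequality
    have htri : fourierDist2 (centerNorm μ) (centerNorm σ) ≤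
        fourierDist2 (centerNorm μ) (centerNorm ν) + fourierDist2 (centerNorm ν) (centerNorm σ) := by
      unfold fourierDist2
      apply Real.iSup_le _ (add_nonneg (fourierDist2_nonneg _ _) (fourierDist2_nonneg _ _))
      intro ξ
      have hnum : ‖fourierT (centerNorm μ) ξ - fourierT (centerNorm σ) ξ‖ ≤
          ‖fourierT (centerNorm μ) ξ - fourierT (centerNorm ν) ξ‖ +
          ‖fourierT (centerNorm ν) ξ - fourierT (centerNorm σ) ξ‖ := by
        simpa [dist_eq_norm] using dist_triangle (fourierT (centerNorm μ) ξ)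
          (fourierT (centerNorm ν) ξ) (fourierT (centerNorm σ) ξ)
      calc ‖fourierT (centerNorm μ) ξ - fourierT (centerNorm σ) ξ‖ / ‖(ξ : EuclideanSpace ℝ (Fin d))‖ ^ 2
          ≤ (‖fourierT (centerNorm μ) ξ - fourierT (centerNorm ν) ξ‖ +
            ‖fourierT (centerNorm ν) ξ - fourierT (centerNorm σ) ξ‖) / ‖(ξ : EuclideanSpace ℝ (Fin d))‖ ^ 2 := by
            gcongr
        _ = ‖fourierT (centerNorm μ) ξ - fourierT (centerNorm ν) ξ‖ / ‖(ξ : EuclideanSpace ℝ (Fin d))‖ ^ 2 +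
            ‖fourierT (centerNorm ν) ξ - fourierT (centerNorm σ) ξ‖ / ‖(ξ : EuclideanSpace ℝ (Fin d))‖ ^ 2 :=
            add_div _ _ _
        _ ≤ fourierDist2 (centerNorm μ) (centerNorm ν) +
            fourierDist2 (centerNorm ν) (centerNorm σ) :=
            add_le_add (le_ciSup hbddμν ξ) (le_ciSup hbddνσ ξ)
    have hb : ‖bary μ - bary σ‖ ≤ ‖bary μ - bary ν‖ + ‖bary ν - bary σ‖ := by
      simpa [dist_eq_norm] using dist_triangle (bary μ) (bary ν) (bary σ)
    have hm : |(μ Set.univ).toReal - (σ Set.univ).toReal| ≤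
        |(μ Set.univ).toReal - (ν Set.univ).toReal| +
        |(ν Set.univ).toReal - (σ Set.univ).toReal| := abs_sub_le _ _ _
    unfold fourierDistTilde2
    linarith
  · -- identity of indiscernibles
    intro h0
    have n1 := fourierDist2_nonneg (centerNorm μ) (centerNorm ν)
    have n2 : (0:ℝ) ≤ ‖bary μ - bary ν‖ := norm_nonneg _
    have n3 : (0:ℝ) ≤ |(μ Set.univ).toReal - (ν Set.univ).toReal| := abs_nonneg _
    unfold fourierDistTilde2 at h0
    have hd2 : fourierDist2 (centerNorm μ) (centerNorm ν) = 0 := by linarith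
    have hbnorm : ‖bary μ - bary ν‖ = 0 := by linarith
    have hmabs : |(μ Set.univ).toReal - (ν Set.univ).toReal| = 0 := by linarith
    have hbary : bary μ = bary ν := sub_eq_zero.mp (norm_eq_zero.mp hbnorm)
    have hmass : μ Set.univ = ν Set.univ :=
      (ENNReal.toReal_eq_toReal_iff' (measure_ne_top μ _) (measure_ne_top ν _)).1
        (sub_eq_zero.mp (abs_eq_zero.mp hmabs))
    have hfour : ∀ ξ : EuclideanSpace ℝ (Fin d), fourierT (centerNorm μ) ξ = fourierT (centerNorm ν) ξ := by
      intro ξ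
      by_cases hξ : ξ = 0
      · rw [hξ, fourierT_zero, fourierT_zero]
      · have hle : ‖fourierT (centerNorm μ) ξ - fourierT (centerNorm ν) ξ‖ / ‖ξ‖ ^ 2 ≤
            fourierDist2 (centerNorm μ) (centerNorm ν) :=
          le_ciSup hbddμν ⟨ξ, hξ⟩
        rw [hd2] at hle
        have hge : 0 ≤ ‖fourierT (centerNorm μ) ξ - fourierT (centerNorm ν) ξ‖ / ‖ξ‖ ^ 2 := by
          positivity
        have heq0 : ‖fourierT (centerNorm μ) ξ - fourierT (centerNorm ν) ξ‖ / ‖ξ‖ ^ 2 = 0 :=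
          le_antisymm hle hge
        have hξ2 : (‖ξ‖ : ℝ) ^ 2 ≠ 0 := (pow_pos (norm_pos_iff.mpr hξ) 2).ne'
        have : ‖fourierT (centerNorm μ) ξ - fourierT (centerNorm ν) ξ‖ = 0 := by
          rcases div_eq_zero_iff.mp heq0 with h | h
          · exact h
          · exact absurd h hξ2
        exact sub_eq_zero.mp (norm_eq_zero.mp this)
    have hcn : centerNorm μ = centerNorm ν := ext_of_fourierT _ _ hfour
    calc μ = (μ Set.univ) • ((centerNorm μ).map (fun x => x + bary μ)) :=
          (centerNorm_reconstruct μ hμ0).symm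
      _ = (ν Set.univ) • ((centerNorm ν).map (fun x => x + bary ν)) := by
          rw [hcn, hbary, hmass]
      _ = ν := centerNorm_reconstruct ν hν0
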